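/- Let a, b be positive integers, let (U_n) be a non-degenerate linear recurrence sequence of integers of order k ≥ 2 whose first coefficient f₁ is a nonzero constant η₁ and which has dominant root α₁, let ε > 0 and r ≥ 1, and order the roots so that |α₂| = max_{2≤j≤t}|α_j|. Then there exists an (effectively computable) constant c₁₂, depending only on ε, γ, k, r, a, b, such that for every (n, m, z₁,…,z_r) with n ≥ m ≥ 1, z₁,…,z_r ∈ 𝒰_S, aU_n + bU_m = z₁ + ⋯ + z_r, |z_i|^{1+ε} ≤ |z_r| for 1 ≤ i ≤ r−1, and |aU_n + bU_m| > (1/2)|η₁|α₁ⁿ, one has |a·η₁·α₁ⁿ·z_r^{−1} − 1| < c₁₂·n^{k−1}·M^{n−m}, where M = max(1/α₁, α₁^{−ε/(1+ε)}, |α₂|/α₁). -/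

import Mathlib

open scoped BigOperators

/-- `z` is an `S`-unit for the finite set of primes `p 0, …, p (L-1)`:
`z = ± p₁^{e₁} ⋯ p_L^{e_L}` with nonnegative integer exponents. -/
def IsSUnit {L : ℕ} (p : Fin L → ℕ) (z : ℤ) : Prop :=
  ∃ (e : Fin L → ℕ) (s : ℤ), (s = 1 ∨ s = -1) ∧ z = s * ∏ i, (p i : ℤ) ^ e i

lemma polyEvalBound (q : Polynomial ℂ) (d : ℕ) (hd : q.natDegree ≤ d) :
    ∃ C : ℝ, 0 ≤ C ∧ ∀ N : ℕ, 1 ≤ N → ‖q.eval (N : ℂ)‖ ≤ C * (N : ℝ) ^ d := by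
  refine ⟨∑ j ∈ Finset.range (q.natDegree + 1), ‖q.coeff j‖,
    Finset.sum_nonneg fun j _ => (norm_nonneg _), fun N hN => ?_⟩
  rw [Polynomial.eval_eq_sum_range, Finset.sum_mul]
  refine (norm_sum_le _ _).trans (Finset.sum_le_sum fun j hj => ?_)
  rw [norm_mul, norm_pow, Complex.norm_natCast]
  have h1 : (1:ℝ) ≤ (N:ℝ) := by exact_mod_cast hN
  have : (N:ℝ) ^ j ≤ (N:ℝ) ^ d := pow_le_pow_right₀ h1 (by
    have := Finset.mem_range.mp hj; omega)
  exact mul_le_mul_of_nonneg_left this (norm_nonneg _)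

lemma sunit_ne_zero {L : ℕ} {p : Fin L → ℕ} (hp : ∀ i, (p i).Prime) {z : ℤ}
    (h : IsSUnit p z) : z ≠ 0 := by
  obtain ⟨e, s, hs, rfl⟩ := h
  have hprod : (∏ i, (p i : ℤ) ^ e i) ≠ 0 :=
    Finset.prod_ne_zero_iff.mpr fun i _ => pow_ne_zero _ (by exact_mod_cast (hp i).ne_zero)
  rcases hs with rfl | rfl <;> simpa using hprod

lemma abs3 (x y w : ℂ) :
    ‖x - y - w‖ ≤ ‖x‖ + ‖y‖ + ‖w‖ := by
  calc ‖x - y - w‖ ≤ ‖x - y‖ + ‖w‖ := norm_sub_le _ _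
    _ ≤ ‖x‖ + ‖y‖ + ‖w‖ := by linarith [norm_sub_le x y]

set_option maxHeartbeats 2000000 in
theorem Phi1_upper_bound
    (k t : ℕ) (hk : 2 ≤ k) (ht : 0 < t)
    (c : Fin k → ℤ) (hck : c ⟨k - 1, by omega⟩ ≠ 0)
    (U : ℕ → ℤ)
    (hrec : ∀ n : ℕ, U (n + k) = ∑ i : Fin k, c i * U (n + k - 1 - (i : ℕ)))
    (hinit : ∃ j : Fin k, U (j : ℕ) ≠ 0)
    (α : Fin t → ℂ) (hα : Function.Injective α)
    (mult : Fin t → ℕ) (hmult : ∀ i, 0 < mult i)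
    (hchar : (Polynomial.X ^ k -
        ∑ i : Fin k, Polynomial.C ((c i : ℂ)) * Polynomial.X ^ (k - 1 - (i : ℕ)))
      = ∏ i : Fin t, (Polynomial.X - Polynomial.C (α i)) ^ (mult i))
    (f : Fin t → Polynomial ℂ) (hf0 : ∀ i, f i ≠ 0)
    (hfdeg : ∀ i, (f i).natDegree < mult i)
    (hrep : ∀ n : ℕ, (U n : ℂ) = ∑ i : Fin t, (f i).eval (n : ℂ) * α i ^ n)
    (hnondeg : ∀ i j : Fin t, i ≠ j → ∀ N : ℕ, 0 < N → (α i / α j) ^ N ≠ 1)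
    (A : ℝ) (hA : (A : ℂ) = α ⟨0, ht⟩) (hA1 : 1 < A)
    (hdom : ∀ j : Fin t, j ≠ ⟨0, ht⟩ → ‖α j‖ < A)
    (η : ℂ) (hη : η ≠ 0) (hf1 : f ⟨0, ht⟩ = Polynomial.C η)
    (ht2 : 2 ≤ t)
    (hmax2 : ∀ j : Fin t, j ≠ ⟨0, ht⟩ → ‖α j‖ ≤ ‖α ⟨1, by omega⟩‖)
    (L : ℕ) (p : Fin L → ℕ) (hp : ∀ i, (p i).Prime) (hpinj : Function.Injective p)
    (a b : ℕ) (ha : 0 < a) (hb : 0 < b)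
    (ε : ℝ) (hε : 0 < ε) (r : ℕ) (hr : 1 ≤ r) :
    ∃ c₁₂ : ℝ, ∀ (n m : ℕ) (z : Fin r → ℤ),
      1 ≤ m → m ≤ n →
      (∀ i, IsSUnit p (z i)) →
      ((a : ℤ) * U n + (b : ℤ) * U m = ∑ i, z i) →
      (∀ i : Fin r, (i : ℕ) < r - 1 →
        ((|z i| : ℝ)) ^ (1 + ε) ≤ ((|z ⟨r - 1, by omega⟩| : ℝ))) →
      ((|(a : ℤ) * U n + (b : ℤ) * U m| : ℝ)) > (1 / 2) * ‖η‖ * A ^ n →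
      ‖(a : ℂ) * η * (A : ℂ) ^ n * ((z ⟨r - 1, by omega⟩ : ℤ) : ℂ)⁻¹ - 1‖
        < c₁₂ * (n : ℝ) ^ (k - 1) *
          (max (max (1 / A) (A ^ (-(ε / (1 + ε))))) (‖α ⟨1, by omega⟩‖ / A)) ^ (n - m) := by
  -- basic indices and constants
  set i0 : Fin t := ⟨0, ht⟩ with hi0
  set i1 : Fin t := ⟨1, by omega⟩ with hi1
  set B : ℝ := ‖α i1‖ with hBdef
  have hA0 : (0:ℝ) < A := lt_trans one_pos hA1
  have hB0 : (0:ℝ) ≤ B := norm_nonneg _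
  have hi10 : i1 ≠ i0 := by simp [hi0, hi1, Fin.ext_iff]
  have hBA : B < A := hdom i1 hi10
  have hη0 : (0:ℝ) < ‖η‖ := norm_pos_iff.mpr hη
  -- multiplicities sum to k
  have hmk : ∀ i : Fin t, mult i ≤ k := by
    have hL : (Polynomial.X ^ k -
        ∑ i : Fin k, Polynomial.C ((c i : ℂ)) * Polynomial.X ^ (k - 1 - (i : ℕ))).natDegree = k := by
      have hs : (∑ i : Fin k, Polynomial.C ((c i : ℂ)) * Polynomial.X ^ (k - 1 - (i : ℕ))).natDegree < k := by
        refine lt_of_le_of_lt (Polynomial.natDegree_sum_le_of_forall_le _ _ fun i _ => ?_)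
          (by omega : k - 1 < k)
        exact (Polynomial.natDegree_C_mul_le _ _).trans
          (by rw [Polynomial.natDegree_X_pow]; omega)
      rw [Polynomial.natDegree_sub_eq_left_of_natDegree_lt (by simpa using hs),
        Polynomial.natDegree_X_pow]
    have hR : (∏ i : Fin t, (Polynomial.X - Polynomial.C (α i)) ^ (mult i)).natDegree
        = ∑ i : Fin t, mult i := by
      rw [Polynomial.natDegree_prod _ _ fun i _ => pow_ne_zero _ (Polynomial.X_sub_C_ne_zero _)]
      simp [Polynomial.natDegree_pow, Polynomial.natDegree_X_sub_C]
    have hkt : ∑ i : Fin t, mult i = k := by rw [← hR, ← hchar, hL]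
    intro i
    calc mult i ≤ ∑ j : Fin t, mult j :=
          Finset.single_le_sum (fun j _ => Nat.zero_le _) (Finset.mem_univ i)
      _ = k := hkt
  -- bound the coefficient polynomials
  have hfd : ∀ i : Fin t, (f i).natDegree ≤ k - 1 := fun i => by
    have h1 := hfdeg i; have h2 := hmk i; omega
  choose Cf hCf0 hCf using fun i : Fin t => polyEvalBound (f i) (k-1) (hfd i)
  set C₀ : ℝ := ∑ i : Fin t, Cf i with hC₀def
  have hC₀0 : 0 ≤ C₀ := Finset.sum_nonneg fun i _ => hCf0 i
  -- bound on the remainder  R N = U N - η A^N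
  have hRbd : ∀ N : ℕ, 1 ≤ N →
      ‖(U N : ℂ) - η * (A:ℂ) ^ N‖ ≤ C₀ * (N:ℝ) ^ (k-1) * B ^ N := by
    intro N hN
    have key : (U N : ℂ) - η * (A:ℂ) ^ N
        = ∑ i ∈ Finset.univ.erase i0, (f i).eval (N:ℂ) * α i ^ N := by
      have hsplit : (f i0).eval (N:ℂ) * α i0 ^ N
            + ∑ i ∈ Finset.univ.erase i0, (f i).eval (N:ℂ) * α i ^ N
          = ∑ i : Fin t, (f i).eval (N:ℂ) * α i ^ N :=
        Finset.add_sum_erase _ (fun i => (f i).eval (N:ℂ) * α i ^ N) (Finset.mem_univ i0)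
      rw [hrep N, ← hsplit, hf1, Polynomial.eval_C, ← hA]; ring
    rw [key]
    refine (norm_sum_le _ _).trans ?_
    have hterm : ∀ i ∈ Finset.univ.erase i0,
        ‖(f i).eval (N:ℂ) * α i ^ N‖ ≤ Cf i * (N:ℝ) ^ (k-1) * B ^ N := by
      intro i hi
      have hine : i ≠ i0 := Finset.ne_of_mem_erase hi
      rw [norm_mul, norm_pow]
      have h1 : ‖(f i).eval (N:ℂ)‖ ≤ Cf i * (N:ℝ) ^ (k-1) := hCf i N hN
      have h2 : ‖α i‖ ^ N ≤ B ^ N :=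
        pow_le_pow_left₀ (norm_nonneg _) (hmax2 i hine) N
      exact mul_le_mul h1 h2 (pow_nonneg (norm_nonneg _) _)
        (mul_nonneg (hCf0 i) (by positivity))
    refine (Finset.sum_le_sum hterm).trans ?_
    have : ∑ i ∈ Finset.univ.erase i0, Cf i * (N:ℝ) ^ (k-1) * B ^ N
        ≤ ∑ i : Fin t, Cf i * (N:ℝ) ^ (k-1) * B ^ N := by
      refine Finset.sum_le_sum_of_subset_of_nonneg (Finset.erase_subset _ _) ?_
      intro i _ _; exact mul_nonneg (mul_nonneg (hCf0 i) (by positivity)) (by positivity)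
    refine this.trans ?_
    rw [← Finset.sum_mul, ← Finset.sum_mul]
  -- the constants
  set εq : ℝ := ε / (1 + ε) with hεqdef
  have h1ε : (0:ℝ) < 1 + ε := by linarith
  have hεq0 : 0 < εq := div_pos hε h1ε
  set K₁ : ℝ := 2 * r * a * C₀ / ‖η‖ with hK₁def
  set K₂ : ℝ := 2 * r * b * (‖η‖ + C₀) / ‖η‖ with hK₂def
  set K₃ : ℝ := ((r:ℝ) - 1) * (‖η‖ / (2*r)) ^ (-εq) with hK₃def
  have hr0 : (0:ℝ) < r := by exact_mod_cast hr
  have hK₁0 : 0 ≤ K₁ := by positivity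
  have hK₂0 : 0 ≤ K₂ := by positivity
  have hK₃0 : 0 ≤ K₃ := by
    apply mul_nonneg _ (Real.rpow_nonneg (by positivity) _)
    have : (1:ℝ) ≤ r := by exact_mod_cast hr
    linarith
  refine ⟨K₁ + K₂ + K₃ + 1, fun n m z hm1 hmn hSU hsum hsmall hbig => ?_⟩
  have hn1 : 1 ≤ n := le_trans hm1 hmn
  set ilast : Fin r := ⟨r - 1, by omega⟩ with hilast
  set M : ℝ := max (max (1/A) (A ^ (-εq))) (B/A) with hMdef
  have hM0 : (0:ℝ) < M :=
    lt_of_lt_of_le (by positivity : (0:ℝ) < 1/A) ((le_max_left _ _).trans (le_max_left _ _))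
  have hM1 : M < 1 := by
    refine max_lt (max_lt ?_ ?_) ?_
    · rw [div_lt_one hA0]; exact hA1
    · exact Real.rpow_lt_one_of_one_lt_of_neg hA1 (by linarith)
    · rw [div_lt_one hA0]; exact hBA
  have hMnm0 : 0 < M ^ (n - m) := pow_pos hM0 _
  have hMn : M ^ n ≤ M ^ (n - m) := pow_le_pow_of_le_one hM0.le hM1.le (Nat.sub_le n m)
  have hnk1 : (1:ℝ) ≤ (n:ℝ) ^ (k-1) := one_le_pow₀ (by exact_mod_cast hn1)
  have hz0 : ∀ i, z i ≠ 0 := fun i => sunit_ne_zero hp (hSU i)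
  have hz1 : ∀ i, (1:ℝ) ≤ ((|z i| : ℤ) : ℝ) := fun i => by
    exact_mod_cast Int.one_le_abs (hz0 i)
  set zR : ℝ := ((|z ilast| : ℤ) : ℝ) with hzRdef
  have hzR0 : (0:ℝ) < zR := lt_of_lt_of_le one_pos (hz1 ilast)
  -- the small S-units
  have hzi : ∀ i ∈ Finset.univ.erase ilast, ((|z i| : ℤ) : ℝ) ≤ zR ^ (1/(1+ε)) := by
    intro i hi
    have hine : i ≠ ilast := Finset.ne_of_mem_erase hi
    have hival : (i : ℕ) < r - 1 := by
      have h1 := i.isLt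
      by_contra h; push_neg at h
      have hv : (ilast : ℕ) = r - 1 := rfl
      exact hine (Fin.ext (by omega))
    have hx0 : (0:ℝ) ≤ ((|z i| : ℤ) : ℝ) := by linarith [hz1 i]
    have hs : (((|z i| : ℤ) : ℝ)) ^ (1 + ε) ≤ zR := by
      have hs0 := hsmall i hival
      rw [← Int.cast_abs, ← Int.cast_abs] at hs0
      exact hs0
    have h2 := Real.rpow_le_rpow (Real.rpow_nonneg hx0 _) hs (by positivity : (0:ℝ) ≤ 1/(1+ε))
    rwa [← Real.rpow_mul hx0, mul_one_div, div_self (ne_of_gt h1ε), Real.rpow_one] at h2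
  have hY1 : zR ^ (1/(1+ε)) ≤ zR := by
    have h1 : 1/(1+ε) ≤ 1 := by rw [div_le_one h1ε]; linarith
    calc zR ^ (1/(1+ε)) ≤ zR ^ (1:ℝ) := Real.rpow_le_rpow_of_exponent_le (hz1 ilast) h1
      _ = zR := Real.rpow_one _
  have hsumE : ∑ i ∈ Finset.univ.erase ilast, ((|z i| : ℤ) : ℝ)
      ≤ ((r:ℝ) - 1) * zR ^ (1/(1+ε)) := by
    have hcard : (Finset.univ.erase ilast).card = r - 1 := by
      rw [Finset.card_erase_of_mem (Finset.mem_univ _), Finset.card_univ, Fintype.card_fin]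
    calc ∑ i ∈ Finset.univ.erase ilast, ((|z i| : ℤ) : ℝ)
        ≤ (Finset.univ.erase ilast).card • (zR ^ (1/(1+ε))) :=
          Finset.sum_le_card_nsmul _ _ _ hzi
      _ = ((r:ℝ) - 1) * zR ^ (1/(1+ε)) := by
          rw [hcard, nsmul_eq_mul, Nat.cast_sub hr]; norm_num
  -- lower bound for zR
  set P : ℝ := ‖η‖ / (2*r) * A ^ n with hPdef
  have hP0 : (0:ℝ) < P := by positivity
  have hPzR : P < zR := by
    have h1 : |(a:ℤ) * U n + (b:ℤ) * U m| ≤ ∑ i, |z i| := by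
      rw [hsum]; exact Finset.abs_sum_le_sum_abs _ _
    have h2 : (∑ i, |z i|) = (∑ i ∈ Finset.univ.erase ilast, |z i|) + |z ilast| :=
      (Finset.sum_erase_add _ _ (Finset.mem_univ ilast)).symm
    have h3 : ((|(a:ℤ) * U n + (b:ℤ) * U m| : ℤ) : ℝ)
        ≤ (∑ i ∈ Finset.univ.erase ilast, ((|z i| : ℤ) : ℝ)) + zR := by
      rw [hzRdef]
      have := h1.trans_eq h2
      exact_mod_cast this
    have hr1 : (1:ℝ) ≤ (r:ℝ) := by exact_mod_cast hr
    have h4 : ((r:ℝ) - 1) * zR ^ (1/(1+ε)) + zR ≤ (r:ℝ) * zR := by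
      nlinarith [mul_le_mul_of_nonneg_left hY1 (by linarith : (0:ℝ) ≤ (r:ℝ) - 1)]
    have hbig' : 1/2 * ‖η‖ * A ^ n
        < ((|(a:ℤ) * U n + (b:ℤ) * U m| : ℤ) : ℝ) := by
      exact_mod_cast hbig
    have h5 : 1/2 * ‖η‖ * A ^ n < (r:ℝ) * zR :=
      lt_of_lt_of_le hbig' (h3.trans (by linarith))
    have h6 : (r:ℝ) * P = 1/2 * ‖η‖ * A ^ n := by
      rw [hPdef]; field_simp
    nlinarith
  -- bounds on |U m| and the remainder
  have hRn := hRbd n hn1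
  have hUm : ‖(U m : ℂ)‖ ≤ (‖η‖ + C₀) * (n:ℝ)^(k-1) * A ^ m := by
    have h1 : ‖(U m : ℂ)‖
        ≤ ‖η‖ * A ^ m + C₀ * (m:ℝ)^(k-1) * B ^ m := by
      calc ‖(U m : ℂ)‖
          = ‖η * (A:ℂ) ^ m + ((U m : ℂ) - η * (A:ℂ) ^ m)‖ := by ring_nf
        _ ≤ ‖η * (A:ℂ) ^ m‖ + ‖(U m : ℂ) - η * (A:ℂ) ^ m‖ :=
            norm_add_le _ _
        _ ≤ ‖η‖ * A ^ m + C₀ * (m:ℝ)^(k-1) * B ^ m := by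
            have : ‖η * (A:ℂ) ^ m‖ = ‖η‖ * A ^ m := by
              rw [norm_mul, norm_pow, Complex.norm_real, Real.norm_eq_abs, abs_of_pos hA0]
            rw [this]
            exact add_le_add_right (hRbd m hm1) _
    have h2 : (m:ℝ)^(k-1) ≤ (n:ℝ)^(k-1) :=
      pow_le_pow_left₀ (by positivity) (by exact_mod_cast hmn) _
    have h3 : B ^ m ≤ A ^ m := pow_le_pow_left₀ hB0 hBA.le _
    have h4 : (0:ℝ) < A ^ m := by positivity
    have e1 : (m:ℝ)^(k-1) * B ^ m ≤ (n:ℝ)^(k-1) * A ^ m :=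
      mul_le_mul h2 h3 (pow_nonneg hB0 m) (by positivity)
    have f1 : C₀ * ((m:ℝ)^(k-1) * B ^ m) ≤ C₀ * ((n:ℝ)^(k-1) * A ^ m) :=
      mul_le_mul_of_nonneg_left e1 hC₀0
    have f2 : ‖η‖ * A ^ m * 1 ≤ ‖η‖ * A ^ m * (n:ℝ)^(k-1) :=
      mul_le_mul_of_nonneg_left hnk1 (mul_nonneg hη0.le h4.le)
    nlinarith [h1, f1, f2]
  -- decompose the main difference
  have hsc : (a:ℂ) * (U n : ℂ) + (b:ℂ) * (U m : ℂ) = ∑ i, ((z i : ℤ) : ℂ) := by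
    have := congrArg (fun x : ℤ => (x : ℂ)) hsum
    push_cast at this
    exact this
  have hsplitz : (∑ i, ((z i : ℤ) : ℂ))
      = (∑ i ∈ Finset.univ.erase ilast, ((z i : ℤ) : ℂ)) + ((z ilast : ℤ) : ℂ) :=
    (Finset.sum_erase_add _ _ (Finset.mem_univ ilast)).symm
  have hD : (a:ℂ) * η * (A:ℂ) ^ n - ((z ilast : ℤ) : ℂ)
      = (∑ i ∈ Finset.univ.erase ilast, ((z i : ℤ) : ℂ))
        - (b:ℂ) * (U m : ℂ) - (a:ℂ) * ((U n : ℂ) - η * (A:ℂ) ^ n) := by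
    linear_combination hsc + hsplitz
  -- numerator bound
  have habsD : ‖(a:ℂ) * η * (A:ℂ) ^ n - ((z ilast : ℤ) : ℂ)‖
      ≤ ((r:ℝ) - 1) * zR ^ (1/(1+ε))
        + (b:ℝ) * ((‖η‖ + C₀) * (n:ℝ)^(k-1) * A ^ m)
        + (a:ℝ) * (C₀ * (n:ℝ)^(k-1) * B ^ n) := by
    rw [hD]
    have t1 : ‖∑ i ∈ Finset.univ.erase ilast, ((z i : ℤ) : ℂ)‖
        ≤ ((r:ℝ) - 1) * zR ^ (1/(1+ε)) := by
      refine (norm_sum_le _ _).trans (le_trans (Finset.sum_le_sum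
        (fun i hi => ?_)) hsumE)
      rw [Complex.norm_intCast, ← Int.cast_abs]
    have t2 : ‖(b:ℂ) * (U m : ℂ)‖
        ≤ (b:ℝ) * ((‖η‖ + C₀) * (n:ℝ)^(k-1) * A ^ m) := by
      rw [norm_mul, Complex.norm_natCast]
      exact mul_le_mul_of_nonneg_left hUm (by positivity)
    have t3 : ‖(a:ℂ) * ((U n : ℂ) - η * (A:ℂ) ^ n)‖
        ≤ (a:ℝ) * (C₀ * (n:ℝ)^(k-1) * B ^ n) := by
      rw [norm_mul, Complex.norm_natCast]
      exact mul_le_mul_of_nonneg_left hRn (by positivity)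
    exact le_trans (abs3 _ _ _) (by linarith)
  -- per-term division bounds
  have hT1 : (a:ℝ) * (C₀ * (n:ℝ)^(k-1) * B ^ n) / P ≤ K₁ * (n:ℝ)^(k-1) * M ^ (n-m) := by
    have heq : (a:ℝ) * (C₀ * (n:ℝ)^(k-1) * B ^ n) / P
        = K₁ * (n:ℝ)^(k-1) * (B/A) ^ n := by
      rw [hPdef, hK₁def, div_pow]; field_simp
    rw [heq]
    have h1 : (B/A) ^ n ≤ M ^ (n-m) :=
      le_trans (pow_le_pow_left₀ (by positivity) (le_max_right _ _) n) hMn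
    exact mul_le_mul_of_nonneg_left h1 (mul_nonneg hK₁0 (by positivity))
  have hT2 : (b:ℝ) * ((‖η‖ + C₀) * (n:ℝ)^(k-1) * A ^ m) / P
      ≤ K₂ * (n:ℝ)^(k-1) * M ^ (n-m) := by
    have hpow : A ^ m / A ^ n = (1/A) ^ (n-m) := by
      have hsplit : A ^ n = A ^ (n-m) * A ^ m := by
        rw [← pow_add]; congr 1; omega
      rw [hsplit, div_pow, one_pow]
      rw [eq_div_iff (by positivity)]
      field_simp
    have heq : (b:ℝ) * ((‖η‖ + C₀) * (n:ℝ)^(k-1) * A ^ m) / P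
        = K₂ * (n:ℝ)^(k-1) * (A ^ m / A ^ n) := by
      rw [hPdef, hK₂def]; field_simp
    rw [heq, hpow]
    have h1 : (1/A) ^ (n-m) ≤ M ^ (n-m) :=
      pow_le_pow_left₀ (by positivity) ((le_max_left _ _).trans (le_max_left _ _)) _
    exact mul_le_mul_of_nonneg_left h1 (mul_nonneg hK₂0 (by positivity))
  have hT3 : ((r:ℝ) - 1) * zR ^ (1/(1+ε)) / zR ≤ K₃ * (n:ℝ)^(k-1) * M ^ (n-m) := by
    have hr1 : (1:ℝ) ≤ (r:ℝ) := by exact_mod_cast hr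
    have e1 : zR ^ (1/(1+ε)) / zR = zR ^ (-εq) := by
      have e2 : 1/(1+ε) - 1 = -εq := by rw [hεqdef]; field_simp; ring
      calc zR ^ (1/(1+ε)) / zR = zR ^ (1/(1+ε)) / zR ^ (1:ℝ) := by rw [Real.rpow_one]
        _ = zR ^ (1/(1+ε) - 1) := (Real.rpow_sub hzR0 _ _).symm
        _ = zR ^ (-εq) := by rw [e2]
    have h2 : zR ^ (-εq) ≤ P ^ (-εq) :=
      Real.rpow_le_rpow_of_nonpos hP0 hPzR.le (by linarith)
    have h3 : P ^ (-εq) = (‖η‖ / (2*r)) ^ (-εq) * (A ^ (-εq)) ^ n := by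
      rw [hPdef, Real.mul_rpow (by positivity) (by positivity)]
      congr 1
      calc ((A:ℝ) ^ n) ^ (-εq) = (A ^ ((n:ℝ))) ^ (-εq) := by rw [Real.rpow_natCast]
        _ = A ^ ((n:ℝ) * (-εq)) := (Real.rpow_mul hA0.le _ _).symm
        _ = A ^ ((-εq) * (n:ℝ)) := by rw [mul_comm]
        _ = (A ^ (-εq)) ^ ((n:ℝ)) := Real.rpow_mul hA0.le _ _
        _ = (A ^ (-εq)) ^ n := Real.rpow_natCast _ n
    have h4 : (A ^ (-εq)) ^ n ≤ M ^ (n-m) :=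
      le_trans (pow_le_pow_left₀ (Real.rpow_nonneg hA0.le _)
        ((le_max_right _ _).trans (le_max_left _ _)) n) hMn
    have h5 : (0:ℝ) ≤ (‖η‖ / (2*r)) ^ (-εq) := Real.rpow_nonneg (by positivity) _
    calc ((r:ℝ) - 1) * zR ^ (1/(1+ε)) / zR = ((r:ℝ) - 1) * (zR ^ (1/(1+ε)) / zR) := by
          rw [mul_div_assoc]
      _ ≤ ((r:ℝ) - 1) * ((‖η‖ / (2*r)) ^ (-εq) * (A ^ (-εq)) ^ n) := by
          rw [e1]
          exact mul_le_mul_of_nonneg_left (h2.trans_eq h3) (by linarith)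
      _ = K₃ * (A ^ (-εq)) ^ n := by rw [hK₃def]; ring
      _ ≤ K₃ * M ^ (n-m) := mul_le_mul_of_nonneg_left h4 hK₃0
      _ ≤ K₃ * (n:ℝ)^(k-1) * M ^ (n-m) := by
          nlinarith [mul_le_mul_of_nonneg_left hnk1 (mul_nonneg hK₃0 hMnm0.le)]
  -- assemble
  have hZc0 : ((z ilast : ℤ) : ℂ) ≠ 0 := by exact_mod_cast hz0 ilast
  have habsZc : ‖((z ilast : ℤ) : ℂ)‖ = zR := by
    rw [Complex.norm_intCast, ← Int.cast_abs]
  have hgoalEq : ‖(a:ℂ) * η * (A:ℂ) ^ n * ((z ilast : ℤ) : ℂ)⁻¹ - 1‖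
      = ‖(a:ℂ) * η * (A:ℂ) ^ n - ((z ilast : ℤ) : ℂ)‖ / zR := by
    have hrw : (a:ℂ) * η * (A:ℂ) ^ n * ((z ilast : ℤ) : ℂ)⁻¹ - 1
        = ((a:ℂ) * η * (A:ℂ) ^ n - ((z ilast : ℤ) : ℂ)) * ((z ilast : ℤ) : ℂ)⁻¹ := by
      rw [sub_mul, mul_inv_cancel₀ hZc0]
    rw [hrw, norm_mul, norm_inv, habsZc, div_eq_mul_inv]
  have hfinal : ‖(a:ℂ) * η * (A:ℂ) ^ n - ((z ilast : ℤ) : ℂ)‖ / zR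
      ≤ (K₁ + K₂ + K₃) * (n:ℝ)^(k-1) * M ^ (n-m) := by
    have s1 : ‖(a:ℂ) * η * (A:ℂ) ^ n - ((z ilast : ℤ) : ℂ)‖ / zR
        ≤ (((r:ℝ) - 1) * zR ^ (1/(1+ε))
            + (b:ℝ) * ((‖η‖ + C₀) * (n:ℝ)^(k-1) * A ^ m)
            + (a:ℝ) * (C₀ * (n:ℝ)^(k-1) * B ^ n)) / zR := by gcongr
    have hT2nn : (0:ℝ) ≤ (b:ℝ) * ((‖η‖ + C₀) * (n:ℝ)^(k-1) * A ^ m) :=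
      mul_nonneg (by positivity) (mul_nonneg (mul_nonneg
        (add_nonneg (norm_nonneg _) hC₀0) (by positivity)) (by positivity))
    have hT1nn : (0:ℝ) ≤ (a:ℝ) * (C₀ * (n:ℝ)^(k-1) * B ^ n) :=
      mul_nonneg (by positivity) (mul_nonneg (mul_nonneg hC₀0 (by positivity)) (by positivity))
    have s2 : (((r:ℝ) - 1) * zR ^ (1/(1+ε))
            + (b:ℝ) * ((‖η‖ + C₀) * (n:ℝ)^(k-1) * A ^ m)
            + (a:ℝ) * (C₀ * (n:ℝ)^(k-1) * B ^ n)) / zR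
        = ((r:ℝ) - 1) * zR ^ (1/(1+ε)) / zR
          + (b:ℝ) * ((‖η‖ + C₀) * (n:ℝ)^(k-1) * A ^ m) / zR
          + (a:ℝ) * (C₀ * (n:ℝ)^(k-1) * B ^ n) / zR := by ring
    have s3 : (b:ℝ) * ((‖η‖ + C₀) * (n:ℝ)^(k-1) * A ^ m) / zR
        ≤ (b:ℝ) * ((‖η‖ + C₀) * (n:ℝ)^(k-1) * A ^ m) / P :=
      div_le_div_of_nonneg_left hT2nn hP0 hPzR.le
    have s4 : (a:ℝ) * (C₀ * (n:ℝ)^(k-1) * B ^ n) / zR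
        ≤ (a:ℝ) * (C₀ * (n:ℝ)^(k-1) * B ^ n) / P :=
      div_le_div_of_nonneg_left hT1nn hP0 hPzR.le
    have := s1.trans_eq s2
    linarith
  calc ‖(a:ℂ) * η * (A:ℂ) ^ n * ((z ilast : ℤ) : ℂ)⁻¹ - 1‖
      = ‖(a:ℂ) * η * (A:ℂ) ^ n - ((z ilast : ℤ) : ℂ)‖ / zR := hgoalEq
    _ ≤ (K₁ + K₂ + K₃) * (n:ℝ)^(k-1) * M ^ (n-m) := hfinal
    _ < (K₁ + K₂ + K₃ + 1) * (n:ℝ)^(k-1) * M ^ (n-m) := by nlinarith
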